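/- Let ι = {o : Ordinal // o < ω₁}, let I_α = [ω·α, ω·(α+1)) for α < ω₁, let f : ι → ℝ be injective with f[I_α] dense in ℝ for all α < ω₁, and let X be the set of all x ∈ {0,1}^ι such that f is strictly increasing on {β : x β = 1}. For α < ω₁ put G_α = {x ∈ X : x β = 0 for all β ∈ I_α}. Then each G_α is a closed Gδ subset of X, the union of the G_α (α < ω₁) is X, and for any two disjoint countable sets A, B of ordinals below ω₁ the set (⋂_{α ∈ A} G_α) \ (⋃_{β ∈ B} G_β) is nonempty; in particular no countable subfamily of {G_α : α < ω₁} has union X. -/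

import Mathlib

open Set Ordinal

/-- An index type of cardinality `ℵ₁`: the countable ordinals. -/
abbrev Omega1Index : Type 1 := {o : Ordinal // o < Ordinal.omega 1}

/-- The block `I_α = [ω·α, ω·(α+1))` of countable ordinals. -/
def block (α : Omega1Index) : Set Omega1Index :=
  {β : Omega1Index | Ordinal.omega0 * α.val ≤ β.val ∧ β.val < Ordinal.omega0 * (α.val + 1)}

/-- The set of points of the Cantor cube `{0,1}^{ω₁}` on whose support `f` is strictly
increasing. -/
def incSupport (f : Omega1Index → ℝ) : Set (Omega1Index → Bool) :=
  {x : Omega1Index → Bool |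
    ∀ β γ : Omega1Index, x β = true → x γ = true → β.val < γ.val → f β < f γ}

/-- The set `G_α` of points of `X` whose support avoids the block `I_α`. -/
def avoidBlock (f : Omega1Index → ℝ) (α : Omega1Index) : Set (incSupport f) :=
  {x : incSupport f | ∀ β ∈ block α, x.val β = false}

/-- Blocks with smaller index lie entirely below blocks with larger index. -/
lemma block_lt {α α' : Omega1Index} (h : α.val < α'.val) {β γ : Omega1Index}
    (hβ : β ∈ block α) (hγ : γ ∈ block α') : β.val < γ.val := by
  calc β.val < Ordinal.omega0 * (α.val + 1) := hβ.2
    _ ≤ Ordinal.omega0 * α'.val := by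
        apply mul_le_mul_right
        rw [← Order.succ_eq_add_one]
        exact Order.succ_le_of_lt h
    _ ≤ γ.val := hγ.1

/-- Distinct blocks are disjoint. -/
lemma block_disjoint {α α' : Omega1Index} (h : α ≠ α') {β : Omega1Index}
    (h1 : β ∈ block α) (h2 : β ∈ block α') : False := by
  rcases lt_trichotomy α.val α'.val with hlt | heq | hgt
  · exact lt_irrefl _ (block_lt hlt h1 h2)
  · exact h (Subtype.ext heq)
  · exact lt_irrefl _ (block_lt hgt h2 h1)

/-- Each block is countable. -/
lemma block_countable (α : Omega1Index) : (block α).Countable := by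
  rw [Set.countable_iff_exists_injective]
  have key : ∀ b : block α, ∃ n : ℕ,
      b.val.val = Ordinal.omega0 * α.val + (n : Ordinal) := by
    rintro ⟨β, hβ1, hβ2⟩
    have h1 : β.val - Ordinal.omega0 * α.val < Ordinal.omega0 := by
      apply Ordinal.sub_lt_of_lt_add
      · rw [← Ordinal.mul_succ, Order.succ_eq_add_one]
        exact hβ2
      · exact Ordinal.omega0_pos
    obtain ⟨n, hn⟩ := Ordinal.lt_omega0.1 h1
    exact ⟨n, by rw [← hn, Ordinal.add_sub_cancel_of_le hβ1]⟩
  choose F hF using key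
  refine ⟨F, fun b b' h => ?_⟩
  have : b.val.val = b'.val.val := by rw [hF, hF, h]
  exact Subtype.ext (Subtype.ext this)

/-- The support of a point of `incSupport f` is countable. -/
lemma support_countable (f : Omega1Index → ℝ) {x : Omega1Index → Bool}
    (hx : x ∈ incSupport f) : {β | x β = true}.Countable := by
  set S := {β | x β = true} with hSdef
  rw [← Set.countable_coe_iff]
  rw [← Set.countable_univ_iff]
  set T := {y : S | ∃ z, f y.val < z ∧ ∀ w : S, y < w → z ≤ f w.val} with hTdef
  have hT : T.Countable := countable_image_lt_image_Ioi (fun y : S => f y.val)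
  have hsub : (Set.univ : Set S) ⊆ T ∪ {y : S | ∀ w : S, w ≤ y} := by
    intro y _
    by_cases hmax : ∀ w : S, w ≤ y
    · exact Or.inr hmax
    · left
      push_neg at hmax
      obtain ⟨w₀, hw₀⟩ := hmax
      have hne : {w : S | y < w}.Nonempty := ⟨w₀, hw₀⟩
      obtain ⟨m, hm, hmin⟩ := (IsWellFounded.wf (r := ((· < ·) : S → S → Prop))).has_min
        {w : S | y < w} hne
      refine ⟨f m.val, ?_, ?_⟩
      · exact hx y.val m.val y.2 m.2 hm
      · intro w hw
        rcases eq_or_lt_of_le (not_lt.1 (hmin w hw)) with h | h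
        · rw [h]
        · exact le_of_lt (hx m.val w.val m.2 w.2 h)
  have hmaxc : ({y : S | ∀ w : S, w ≤ y}).Subsingleton := by
    intro a ha b hb
    exact le_antisymm (hb a) (ha b)
  exact Set.Countable.mono hsub (hT.union hmaxc.countable)

/-- Every point of `incSupport f` avoids some block. -/
lemma exists_avoidBlock (f : Omega1Index → ℝ) (x : incSupport f) :
    ∃ α, x ∈ avoidBlock f α := by
  have hc : {β | x.val β = true}.Countable := support_countable f x.2
  set S := {β | x.val β = true} with hSdef
  rcases S.eq_empty_or_nonempty with hS | hS
  · refine ⟨⟨0, Ordinal.omega_pos 1⟩, fun β _ => ?_⟩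
    by_contra h
    have : β ∈ S := by show x.val β = true; simpa using h
    rw [hS] at this; exact this
  · obtain ⟨g, hg⟩ := hc.exists_eq_range hS
    set o : ℕ → Ordinal := fun n => (g n).val with hodef
    have ho : ∀ n, o n < (Cardinal.aleph 1).ord := fun n => by
      rw [Cardinal.ord_aleph]; exact (g n).2
    have hδ : iSup o < Ordinal.omega 1 := by
      rw [Cardinal.ord_aleph] at ho; exact Ordinal.iSup_lt_omega_one ho
    set δ := iSup o with hδdef
    have hδ1 : δ + 1 < Ordinal.omega 1 := by
      rw [← Order.succ_eq_add_one]
      exact (Cardinal.isSuccLimit_omega 1).succ_lt hδ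
    refine ⟨⟨δ + 1, hδ1⟩, fun β hβ => ?_⟩
    by_contra h
    have hβS : β ∈ S := by show x.val β = true; simpa using h
    rw [hg] at hβS
    obtain ⟨n, hn⟩ := hβS
    have h1 : β.val ≤ δ := by
      rw [← hn]
      exact Ordinal.le_iSup o n
    have h2 : δ + 1 ≤ Ordinal.omega0 * (δ + 1) := by
      conv_lhs => rw [← one_mul (δ + 1)]
      exact mul_le_mul_left (Order.one_le_iff_pos.2 Ordinal.omega0_pos) _
    have h3 : Ordinal.omega0 * (δ + 1) ≤ β.val := hβ.1
    exact absurd ((h1.trans_lt (lt_add_one δ)).trans_le (h2.trans h3)) (lt_irrefl _)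

/-- The key combinatorial lemma: one can separate disjoint countable families. -/
lemma avoidBlock_separation (f : Omega1Index → ℝ)
    (hdense : ∀ α : Omega1Index, Dense (f '' block α))
    (A B : Set Omega1Index) (hA : A.Countable) (hB : B.Countable)
    (hAB : Disjoint A B) :
    ((⋂ α ∈ A, avoidBlock f α) \ (⋃ β ∈ B, avoidBlock f β)).Nonempty := by
  classical
  haveI : Countable B := hB.to_subtype
  haveI : Countable (↥B ×ₗ Bool) := Countable.of_equiv _ toLex
  obtain ⟨e⟩ := Order.embedding_from_countable_to_dense (↥B ×ₗ Bool) ℚ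
  have key : ∀ b : B, ∃ γ : Omega1Index, γ ∈ block b.val ∧
      f γ ∈ Ioo ((e (toLex (b, false)) : ℝ)) ((e (toLex (b, true)) : ℝ)) := by
    intro b
    have hlt : toLex ((b, false) : ↥B × Bool) < toLex (b, true) := by
      rw [Prod.Lex.lt_iff]
      exact Or.inr ⟨rfl, Bool.false_lt_true⟩
    have hlt' : ((e (toLex (b, false)) : ℝ)) < ((e (toLex (b, true)) : ℝ)) := by
      exact_mod_cast e.strictMono hlt
    obtain ⟨y, hy1, hy2⟩ := (hdense b.val).exists_mem_open isOpen_Ioo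
      (nonempty_Ioo.2 hlt')
    obtain ⟨γ, hγ1, hγ2⟩ := hy1
    exact ⟨γ, hγ1, hγ2 ▸ hy2⟩
  choose g hg1 hg2 using key
  set x : Omega1Index → Bool := fun γ => decide (∃ b : B, g b = γ) with hxdef
  have hxiff : ∀ γ, x γ = true ↔ ∃ b : B, g b = γ := fun γ => decide_eq_true_iff
  have hx : x ∈ incSupport f := by
    intro β γ hβ hγ hlt
    obtain ⟨b, rfl⟩ := (hxiff β).1 hβ
    obtain ⟨b', rfl⟩ := (hxiff _).1 hγ
    rcases lt_trichotomy b.val.val b'.val.val with h | h | h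
    · have h1 : f (g b) < ((e (toLex (b, true)) : ℝ)) := (hg2 b).2
      have h2 : ((e (toLex (b', false)) : ℝ)) < f (g b') := (hg2 b').1
      have h3 : toLex ((b, true) : ↥B × Bool) < toLex (b', false) := by
        rw [Prod.Lex.lt_iff]
        exact Or.inl (by exact_mod_cast h)
      have h4 : ((e (toLex (b, true)) : ℝ)) < ((e (toLex (b', false)) : ℝ)) := by
        exact_mod_cast e.strictMono h3
      linarith
    · have hb : b = b' := Subtype.ext (Subtype.ext h)
      rw [hb] at hlt
      exact absurd hlt (lt_irrefl _)
    · exact absurd (block_lt (Subtype.mk_lt_mk.2 h) (hg1 b') (hg1 b)) (not_lt.2 hlt.le)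
  refine ⟨⟨x, hx⟩, ?_, ?_⟩
  · simp only [Set.mem_iInter]
    intro α hα β hβ
    by_contra h
    obtain ⟨b, rfl⟩ := (hxiff β).1 (by simpa using h)
    have hne : α ≠ b.val := by
      intro heq
      exact (Set.disjoint_left.1 hAB hα) (heq ▸ b.2)
    exact block_disjoint hne hβ (hg1 b)
  · intro hmem
    simp only [Set.mem_iUnion] at hmem
    obtain ⟨β, hβB, hG⟩ := hmem
    have h1 : x (g ⟨β, hβB⟩) = false := hG (g ⟨β, hβB⟩) (hg1 ⟨β, hβB⟩)
    have h2 : x (g ⟨β, hβB⟩) = true := (hxiff _).2 ⟨⟨β, hβB⟩, rfl⟩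
    rw [h1] at h2
    exact Bool.false_ne_true h2

/-- With `f : ω₁ → ℝ` injective and mapping each block `I_α` onto a dense subset of `ℝ`,
and `X` the set of points of the Cantor cube with `f` strictly increasing on their support:
each `G_α = {x ∈ X : x↾I_α ≡ 0}` is a closed `Gδ` subset of `X`, the `G_α` cover `X`, and
for disjoint countable sets `A`, `B` of indices the set `⋂_{α∈A} G_α \ ⋃_{β∈B} G_β` is
nonempty; in particular no countable subfamily of the `G_α` covers `X`. -/
theorem avoidBlock_cover_properties
    (f : Omega1Index → ℝ) (hf : Function.Injective f)
    (hdense : ∀ α : Omega1Index, Dense (f '' block α)) :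
    (∀ α, IsClosed (avoidBlock f α) ∧ IsGδ (avoidBlock f α)) ∧
    (⋃ α, avoidBlock f α) = Set.univ ∧
    (∀ A B : Set Omega1Index, A.Countable → B.Countable → Disjoint A B →
      ((⋂ α ∈ A, avoidBlock f α) \ (⋃ β ∈ B, avoidBlock f β)).Nonempty) ∧
    ¬ ∃ C : Set Omega1Index, C.Countable ∧ (⋃ α ∈ C, avoidBlock f α) = Set.univ := by
  refine ⟨?_, ?_, ?_, ?_⟩
  · intro α
    have heq : avoidBlock f α =
        ⋂ β ∈ block α, {x : incSupport f | x.val β = false} := by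
      ext x
      simp [avoidBlock, Set.mem_iInter]
    have hcl : ∀ β : Omega1Index, IsClosed {x : incSupport f | x.val β = false} := by
      intro β
      have : {x : incSupport f | x.val β = false} =
          (fun x : incSupport f => x.val β) ⁻¹' {false} := rfl
      rw [this]
      exact IsClosed.preimage ((continuous_apply β).comp continuous_subtype_val)
        isClosed_singleton
    constructor
    · rw [heq]
      exact isClosed_biInter fun β _ => hcl β
    · rw [heq]
      refine IsGδ.biInter (block_countable α) fun β _ => ?_
      have : {x : incSupport f | x.val β = false} =
          (fun x : incSupport f => x.val β) ⁻¹' {false} := rfl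
      rw [this]
      exact (IsOpen.preimage ((continuous_apply β).comp continuous_subtype_val)
        (isOpen_discrete _)).isGδ
  · ext x
    simp only [Set.mem_iUnion, Set.mem_univ, iff_true]
    exact exists_avoidBlock f x
  · exact avoidBlock_separation f hdense
  · rintro ⟨C, hC, hcov⟩
    obtain ⟨p, hp1, hp2⟩ := avoidBlock_separation f hdense ∅ C Set.countable_empty hC
      (Set.empty_disjoint C)
    exact hp2 (hcov ▸ Set.mem_univ p)
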